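/- In a two-player zero-sum game, if there exists a non-essential pure strategy (one played with probability zero in every Nash equilibrium), then for some player (say player 1) there exists a non-essential strategy s₁ and a Nash equilibrium (x*, y*) such that ⟨e_{s₁}, A y*⟩ < ⟨x*, A y*⟩, i.e., deviating to s₁ against the equilibrium is strictly worse than the equilibrium value. -/

import Mathlib

open Matrix Finset

variable {n : ℕ} {ι : Type*} [Fintype ι]

lemma cone_carath (V : ι → (Fin n → ℝ)) (x : Fin n → ℝ)
    (hx : ∃ c : ι → ℝ, (∀ i, 0 ≤ c i) ∧ x = ∑ i, c i • V i) :
    ∃ S : Finset ι, LinearIndependent ℝ (fun i : S => V i) ∧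
      ∃ c : ι → ℝ, (∀ i, 0 ≤ c i) ∧ (∀ i ∉ S, c i = 0) ∧ x = ∑ i, c i • V i := by
  classical
  obtain ⟨c, hc, rfl⟩ := hx
  suffices h : ∀ (k : ℕ) (S : Finset ι) (c : ι → ℝ), S.card ≤ k → (∀ i, 0 ≤ c i) →
      (∀ i ∉ S, c i = 0) →
      ∃ T : Finset ι, LinearIndependent ℝ (fun i : T => V i) ∧
        ∃ d : ι → ℝ, (∀ i, 0 ≤ d i) ∧ (∀ i ∉ T, d i = 0) ∧
          ∑ i, d i • V i = ∑ i, c i • V i by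
    obtain ⟨T, hT, d, hd0, hdT, hsum⟩ :=
      h (Finset.univ.card) Finset.univ c le_rfl hc (by simp)
    exact ⟨T, hT, d, hd0, hdT, hsum.symm⟩
  intro k
  induction k with
  | zero =>
    intro S c hSk hc0 hcS
    have hS : S = ∅ := Finset.card_eq_zero.mp (Nat.le_zero.mp hSk)
    subst hS
    exact ⟨∅, linearIndependent_empty_type, c, hc0, hcS, rfl⟩
  | succ k ih =>
    intro S c hSk hc0 hcS
    by_cases hli : LinearIndependent ℝ (fun i : S => V i)
    · exact ⟨S, hli, c, hc0, hcS, rfl⟩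
    · obtain ⟨g, hgsum, i₀, hgi₀⟩ := Fintype.not_linearIndependent_iff.mp hli
      set G : ι → ℝ := fun i => if h : i ∈ S then g ⟨i, h⟩ else 0 with hG
      have hGS : ∀ i ∉ S, G i = 0 := fun i hi => by simp [hG, hi]
      have hGsum : ∑ i, G i • V i = 0 := by
        rw [← Finset.sum_subset (Finset.subset_univ S)
          (fun i _ hiS => by rw [hGS i hiS, zero_smul])]
        rw [← Finset.sum_coe_sort S (fun x => G x • V x), ← hgsum]
        apply Finset.sum_congr rfl
        intro i _
        congr 1
        simp [hG, i.2]
      have key : ∀ G : ι → ℝ, (∃ i, 0 < G i) → (∀ i ∉ S, G i = 0) →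
          ∑ i, G i • V i = 0 →
          ∃ T : Finset ι, LinearIndependent ℝ (fun i : T => V i) ∧
            ∃ d : ι → ℝ, (∀ i, 0 ≤ d i) ∧ (∀ i ∉ T, d i = 0) ∧
              ∑ i, d i • V i = ∑ i, c i • V i := by
        clear hGsum hGS hgi₀ hgsum hG
        intro G hGex hGS hGsum
        obtain ⟨j₀, hj₀⟩ := hGex
        have hne : (Finset.univ.filter (fun i => 0 < G i)).Nonempty :=
          ⟨j₀, by simp [hj₀]⟩
        obtain ⟨i₁, hi₁mem, hi₁min⟩ :=
          (Finset.univ.filter (fun i => 0 < G i)).exists_min_image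
            (fun i => c i / G i) hne
        have hGi₁ : 0 < G i₁ := (Finset.mem_filter.mp hi₁mem).2
        set t : ℝ := c i₁ / G i₁ with ht
        have ht0 : 0 ≤ t := div_nonneg (hc0 i₁) hGi₁.le
        set d : ι → ℝ := fun i => c i - t * G i with hd
        have hd0 : ∀ i, 0 ≤ d i := by
          intro i
          by_cases hpos : 0 < G i
          · have h1 : t ≤ c i / G i := hi₁min i (by simp [hpos])
            simp only [hd]
            rw [sub_nonneg]
            calc t * G i ≤ (c i / G i) * G i :=
                  mul_le_mul_of_nonneg_right h1 hpos.le
              _ = c i := by field_simp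
          · push_neg at hpos
            have h2 : t * G i ≤ 0 := mul_nonpos_of_nonneg_of_nonpos ht0 hpos
            simp only [hd]; linarith [hc0 i]
        have hdi₁ : d i₁ = 0 := by
          have hne' : G i₁ ≠ 0 := hGi₁.ne'
          simp only [hd, ht]
          field_simp
          ring
        have hi₁S : i₁ ∈ S := by
          by_contra h
          exact absurd (hGS i₁ h) hGi₁.ne'
        have hdS : ∀ i ∉ S.erase i₁, d i = 0 := by
          intro i hi
          by_cases hiS : i ∈ S
          · have : i = i₁ := by
              by_contra hne'
              exact hi (Finset.mem_erase.mpr ⟨hne', hiS⟩)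
            rw [this]; exact hdi₁
          · simp only [hd, hcS i hiS, hGS i hiS, mul_zero, sub_zero]
        have hdsum : ∑ i, d i • V i = ∑ i, c i • V i := by
          have h3 : ∑ i, d i • V i = ∑ i, c i • V i - t • ∑ i, G i • V i := by
            rw [Finset.smul_sum, ← Finset.sum_sub_distrib]
            apply Finset.sum_congr rfl
            intro i _
            simp [hd, sub_smul, smul_smul]
          rw [h3, hGsum, smul_zero, sub_zero]
        have hcard : (S.erase i₁).card ≤ k := by
          have := Finset.card_erase_of_mem hi₁S
          omega
        obtain ⟨T, hT, e, he0, heT, hesum⟩ := ih (S.erase i₁) d hcard hd0 hdS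
        exact ⟨T, hT, e, he0, heT, hesum.trans hdsum⟩
      by_cases hpos : ∃ i, 0 < G i
      · exact key G hpos hGS hGsum
      · apply key (-G)
        · push_neg at hpos
          refine ⟨(i₀ : ι), ?_⟩
          have h1 : G i₀ ≠ 0 := by
            simpa [hG, i₀.2] using hgi₀
          have h2 := hpos (i₀ : ι)
          simp only [Pi.neg_apply]
          cases' lt_or_eq_of_le h2 with h h
          · linarith
          · exact absurd h h1
        · intro i hi; simp [hGS i hi]
        · simp only [Pi.neg_apply, neg_smul, Finset.sum_neg_distrib, hGsum, neg_zero]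

lemma sum_extend (S : Finset ι) (c : {x // x ∈ S} → ℝ) (f : ι → Fin n → ℝ) [DecidableEq ι]
    [DecidablePred (· ∈ S)] :
    ∑ i : ι, (if h : i ∈ S then c ⟨i, h⟩ else 0) • f i = ∑ i : {x // x ∈ S}, c i • f i := by
  rw [← Finset.sum_subset (Finset.subset_univ S)
    (fun i _ hiS => by rw [dif_neg hiS, zero_smul])]
  rw [← Finset.sum_coe_sort S (fun x => (if h : x ∈ S then c ⟨x, h⟩ else 0) • f x)]
  apply Finset.sum_congr rfl
  intro i _
  congr 1
  simp [i.2]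

lemma isClosed_cone (V : ι → (Fin n → ℝ)) :
    IsClosed {x : Fin n → ℝ | ∃ c : ι → ℝ, (∀ i, 0 ≤ c i) ∧ x = ∑ i, c i • V i} := by
  classical
  have heq : {x : Fin n → ℝ | ∃ c : ι → ℝ, (∀ i, 0 ≤ c i) ∧ x = ∑ i, c i • V i} =
      ⋃ (S : Finset ι) (_ : LinearIndependent ℝ (fun i : S => V i)),
        (fun c : {x // x ∈ S} → ℝ => ∑ i : {x // x ∈ S}, c i • V i) ''
          {c | ∀ i, 0 ≤ c i} := by
    ext x
    simp only [Set.mem_setOf_eq, Set.mem_iUnion, Set.mem_image]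
    constructor
    · intro hx
      obtain ⟨S, hS, c, hc0, hcS, rfl⟩ := cone_carath V x hx
      refine ⟨S, hS, fun i => c i, fun i => hc0 i, ?_⟩
      rw [← sum_extend S (fun i => c (i : ι)) V]
      apply Finset.sum_congr rfl
      intro i _
      congr 1
      by_cases h : i ∈ S
      · simp [h]
      · simp [h, hcS i h]
    · rintro ⟨S, _, c, hc0, rfl⟩
      refine ⟨fun i => if h : i ∈ S then c ⟨i, h⟩ else 0, ?_, ?_⟩
      · intro i
        by_cases h : i ∈ S
        · simpa [h] using hc0 ⟨i, h⟩
        · simp [h]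
      · rw [sum_extend S c V]
  rw [heq]
  apply isClosed_iUnion_of_finite
  intro S
  rw [Set.iUnion_eq_if]
  split_ifs with hLI
  · -- image of closed set under closed embedding
    set φ : ({x // x ∈ S} → ℝ) →ₗ[ℝ] (Fin n → ℝ) :=
      ∑ i : {x // x ∈ S}, (LinearMap.proj i).smulRight (V i) with hφ
    have hφapp : ∀ c, φ c = ∑ i : {x // x ∈ S}, c i • V i := by
      intro c
      simp [hφ, LinearMap.sum_apply]
    have hker : LinearMap.ker φ = ⊥ := by
      rw [LinearMap.ker_eq_bot']
      intro c hc
      rw [hφapp] at hc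
      have := Fintype.linearIndependent_iff.mp hLI c hc
      funext i
      exact this i
    have hemb := LinearMap.isClosedEmbedding_of_injective hker
    have himg : (fun c : {x // x ∈ S} → ℝ => ∑ i : {x // x ∈ S}, c i • V i) ''
        {c | ∀ i, 0 ≤ c i} = φ '' {c | ∀ i, 0 ≤ c i} := by
      apply Set.image_congr
      intro c _
      rw [hφapp]
    rw [himg]
    apply hemb.isClosedMap
    have : IsClosed {c : {x // x ∈ S} → ℝ | ∀ i, 0 ≤ c i} := by
      have : {c : {x // x ∈ S} → ℝ | ∀ i, 0 ≤ c i} =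
          ⋂ i, {c : {x // x ∈ S} → ℝ | 0 ≤ c i} := by
        ext c; simp [Set.mem_iInter]
      rw [this]
      exact isClosed_iInter fun i =>
        isClosed_le continuous_const (continuous_apply i)
    exact this
  · exact isClosed_empty

lemma cone_convex (V : ι → (Fin n → ℝ)) :
    Convex ℝ {x : Fin n → ℝ | ∃ c : ι → ℝ, (∀ i, 0 ≤ c i) ∧ x = ∑ i, c i • V i} := by
  rintro x ⟨c, hc0, rfl⟩ y ⟨d, hd0, rfl⟩ a b ha hb _
  refine ⟨fun i => a * c i + b * d i,
    fun i => add_nonneg (mul_nonneg ha (hc0 i)) (mul_nonneg hb (hd0 i)), ?_⟩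
  rw [Finset.smul_sum, Finset.smul_sum, ← Finset.sum_add_distrib]
  apply Finset.sum_congr rfl
  intro i _
  simp [add_smul, smul_smul]

lemma farkas (V : ι → (Fin n → ℝ)) (b : Fin n → ℝ)
    (hb : ¬ ∃ c : ι → ℝ, (∀ i, 0 ≤ c i) ∧ b = ∑ i, c i • V i) :
    ∃ w : Fin n → ℝ, (∀ i, 0 ≤ V i ⬝ᵥ w) ∧ b ⬝ᵥ w < 0 := by
  classical
  obtain ⟨f, u, hfb, hfc⟩ :=
    geometric_hahn_banach_point_closed (cone_convex V) (isClosed_cone V) hb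
  have h0 : (0 : Fin n → ℝ) ∈ {x : Fin n → ℝ | ∃ c : ι → ℝ, (∀ i, 0 ≤ c i) ∧
      x = ∑ i, c i • V i} := ⟨0, fun i => le_rfl, by simp⟩
  have hu0 : u < 0 := by simpa using hfc 0 h0
  have hmem : ∀ i, V i ∈ {x : Fin n → ℝ | ∃ c : ι → ℝ, (∀ i, 0 ≤ c i) ∧
      x = ∑ i, c i • V i} := by
    intro i
    refine ⟨fun j => if j = i then 1 else 0, fun j => by positivity, ?_⟩
    simp [ite_smul, Finset.sum_ite_eq']
  have hf0 : ∀ i, 0 ≤ f (V i) := by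
    intro i
    by_contra h
    push_neg at h
    have hconemem : ∀ t : ℝ, 0 ≤ t → u < t * f (V i) := by
      intro t ht
      have hmem2 : (t • V i) ∈ {x : Fin n → ℝ | ∃ c : ι → ℝ, (∀ i, 0 ≤ c i) ∧
          x = ∑ i, c i • V i} := by
        obtain ⟨c, hc0, hceq⟩ := hmem i
        exact ⟨fun j => t * c j, fun j => mul_nonneg ht (hc0 j),
          by rw [hceq, Finset.smul_sum]; simp [smul_smul]⟩
      have := hfc _ hmem2
      simpa using this
    have ht0 : (0:ℝ) ≤ (u - 1) / f (V i) := by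
      have h1 : u - 1 < 0 := by linarith
      exact le_of_lt (div_pos_of_neg_of_neg h1 h)
    have hlast := hconemem ((u - 1) / f (V i)) ht0
    rw [div_mul_cancel₀ _ h.ne] at hlast
    linarith
  set w : Fin n → ℝ := fun j => f (Pi.single j 1) with hw
  have hfdot : ∀ x : Fin n → ℝ, f x = x ⬝ᵥ w := by
    intro x
    have hx : x = ∑ j, x j • (Pi.single j 1 : Fin n → ℝ) := by
      funext j
      rw [Finset.sum_apply]
      simp [Pi.single_apply, Finset.sum_ite_eq]
    conv_lhs => rw [hx]
    rw [map_sum]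
    simp only [_root_.map_smul, smul_eq_mul]
    simp [dotProduct, hw]
  refine ⟨w, fun i => by rw [← hfdot]; exact hf0 i, ?_⟩
  rw [← hfdot]
  calc f b < u := hfb
    _ < 0 := hu0

/-- Nash equilibrium of the two-player zero-sum game with payoff matrix `A`. -/
def IsNashEq {m n : ℕ} (A : Matrix (Fin m) (Fin n) ℝ)
    (xstar : Fin m → ℝ) (ystar : Fin n → ℝ) : Prop :=
  xstar ∈ stdSimplex ℝ (Fin m) ∧ ystar ∈ stdSimplex ℝ (Fin n) ∧
  (∀ x ∈ stdSimplex ℝ (Fin m), x ⬝ᵥ A.mulVec ystar ≤ xstar ⬝ᵥ A.mulVec ystar) ∧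
  (∀ y ∈ stdSimplex ℝ (Fin n), xstar ⬝ᵥ A.mulVec ystar ≤ xstar ⬝ᵥ A.mulVec y)

lemma dot_le_of_forall_le {m : ℕ} {x : Fin m → ℝ} (hx : x ∈ stdSimplex ℝ (Fin m))
    {u : Fin m → ℝ} {v : ℝ} (h : ∀ i, u i ≤ v) : x ⬝ᵥ u ≤ v := by
  calc x ⬝ᵥ u = ∑ i, x i * u i := rfl
    _ ≤ ∑ i, x i * v :=
      Finset.sum_le_sum fun i _ => mul_le_mul_of_nonneg_left (h i) (hx.1 i)
    _ = (∑ i, x i) * v := by rw [Finset.sum_mul]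
    _ = v := by rw [hx.2, one_mul]

lemma le_dot_of_forall_le {m : ℕ} {x : Fin m → ℝ} (hx : x ∈ stdSimplex ℝ (Fin m))
    {u : Fin m → ℝ} {v : ℝ} (h : ∀ i, v ≤ u i) : v ≤ x ⬝ᵥ u := by
  calc v = (∑ i, x i) * v := by rw [hx.2, one_mul]
    _ = ∑ i, x i * v := by rw [Finset.sum_mul]
    _ ≤ ∑ i, x i * u i :=
      Finset.sum_le_sum fun i _ => mul_le_mul_of_nonneg_left (h i) (hx.1 i)
    _ = x ⬝ᵥ u := rfl

lemma case_row {m n : ℕ} (A : Matrix (Fin m) (Fin n) ℝ) (s : Fin m)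
    (hness : ∀ x y, IsNashEq A x y → x s = 0)
    (x0 : Fin m → ℝ) (y0 : Fin n → ℝ) (h0 : IsNashEq A x0 y0) :
    ∃ xstar ystar, IsNashEq A xstar ystar ∧
      (Pi.single s (1 : ℝ)) ⬝ᵥ A.mulVec ystar < xstar ⬝ᵥ A.mulVec ystar := by
  classical
  by_contra hcon
  push_neg at hcon
  obtain ⟨hx0, hy0, hmax, hmin⟩ := h0
  set v : ℝ := x0 ⬝ᵥ A.mulVec y0 with hv
  -- every optimal y has (Ay)_s ≥ v
  have hMin : ∀ y ∈ stdSimplex ℝ (Fin n), (∀ i, A.mulVec y i ≤ v) → v ≤ A.mulVec y s := by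
    intro y hy hyle
    have hval : x0 ⬝ᵥ A.mulVec y = v :=
      le_antisymm (dot_le_of_forall_le hx0 hyle) (hmin y hy)
    have hNE : IsNashEq A x0 y :=
      ⟨hx0, hy, fun x hx => by rw [hval]; exact dot_le_of_forall_le hx hyle,
        fun y' hy' => by rw [hval]; exact hmin y' hy'⟩
    have h1 := hcon x0 y hNE
    rw [hval, single_dotProduct, one_mul] at h1
    exact h1
  -- Farkas setup
  set V : (Fin m ⊕ Fin n) → (Fin n → ℝ) :=
    Sum.elim (fun i => (fun j => A i j - v)) (fun j => -(Pi.single j 1)) with hV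
  set bb : Fin n → ℝ := fun j => v - A s j with hbbdef
  have hbb : ∃ c : (Fin m ⊕ Fin n) → ℝ, (∀ i, 0 ≤ c i) ∧ bb = ∑ i, c i • V i := by
    by_contra hno
    obtain ⟨w, hw0, hwb⟩ := farkas V bb hno
    set z : Fin n → ℝ := fun j => - w j with hz
    have hz0 : ∀ j, 0 ≤ z j := by
      intro j
      have := hw0 (Sum.inr j)
      simp only [hV, Sum.elim_inr, neg_dotProduct,
        single_dotProduct, one_mul] at this
      simp only [hz]
      linarith
    have hrow : ∀ i, ∑ j, A i j * z j ≤ v * ∑ j, z j := by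
      intro i
      have := hw0 (Sum.inl i)
      simp only [hV, Sum.elim_inl, dotProduct] at this
      have h2 : ∑ j, (A i j - v) * z j ≤ 0 := by
        have h3 : ∑ j, (A i j - v) * z j = - ∑ j, (A i j - v) * w j := by
          rw [← Finset.sum_neg_distrib]
          apply Finset.sum_congr rfl
          intro j _
          simp only [hz]; ring
        rw [h3]
        linarith
      have h4 : ∑ j, (A i j - v) * z j = ∑ j, A i j * z j - v * ∑ j, z j := by
        rw [Finset.mul_sum, ← Finset.sum_sub_distrib]
        apply Finset.sum_congr rfl
        intro j _; ring
      linarith [h4 ▸ h2]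
    have hsrow : v * ∑ j, z j < ∑ j, A s j * z j → False := by
      intro h; linarith [hrow s]
    have hbw : ∑ j, (v - A s j) * z j > 0 := by
      have h3 : ∑ j, (v - A s j) * z j = - (bb ⬝ᵥ w) := by
        simp only [dotProduct, hbbdef, ← Finset.sum_neg_distrib]
        apply Finset.sum_congr rfl
        intro j _
        simp only [hz]; ring
      rw [h3]; linarith
    have hssum : ∑ j, A s j * z j < v * ∑ j, z j := by
      have h4 : ∑ j, (v - A s j) * z j = v * ∑ j, z j - ∑ j, A s j * z j := by
        rw [Finset.mul_sum, ← Finset.sum_sub_distrib]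
        apply Finset.sum_congr rfl
        intro j _; ring
      linarith [h4 ▸ hbw]
    set σ : ℝ := ∑ j, z j with hσ
    have hσpos : 0 < σ := by
      rcases lt_or_eq_of_le (Finset.sum_nonneg fun j _ => hz0 j) with h | h
      · exact h
      · exfalso
        have hzz : ∀ j ∈ Finset.univ, z j = 0 :=
          (Finset.sum_eq_zero_iff_of_nonneg (fun j (_ : j ∈ Finset.univ) => hz0 j)).mp h.symm
        have hzz' : ∀ j, z j = 0 := fun j => hzz j (Finset.mem_univ j)
        apply absurd hbw
        simp [hzz']
    set y : Fin n → ℝ := fun j => z j / σ with hy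
    have hyΔ : y ∈ stdSimplex ℝ (Fin n) := by
      constructor
      · intro j; exact div_nonneg (hz0 j) hσpos.le
      · simp only [hy, div_eq_mul_inv, ← Finset.sum_mul]
        rw [← hσ, mul_inv_cancel₀ hσpos.ne']
    have hymul : ∀ i, A.mulVec y i = (∑ j, A i j * z j) / σ := by
      intro i
      simp only [Matrix.mulVec, dotProduct, hy]
      rw [Finset.sum_div]
      apply Finset.sum_congr rfl
      intro j _; ring
    have hyopt : ∀ i, A.mulVec y i ≤ v := by
      intro i
      rw [hymul i]
      rw [div_le_iff₀ hσpos]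
      calc ∑ j, A i j * z j ≤ v * ∑ j, z j := hrow i
        _ = v * σ := by rw [hσ]
    have hys : A.mulVec y s < v := by
      rw [hymul s, div_lt_iff₀ hσpos]
      calc ∑ j, A s j * z j < v * ∑ j, z j := hssum
        _ = v * σ := by rw [hσ]
    exact absurd (hMin y hyΔ hyopt) (not_le.mpr hys)
  -- use the conic combination to build an optimal x with x s > 0
  obtain ⟨c, hc0, hceq⟩ := hbb
  set lam : Fin m → ℝ := fun i => c (Sum.inl i) with hlam
  set mu : Fin n → ℝ := fun j => c (Sum.inr j) with hmu
  have hkey : ∀ j, v - A s j = (∑ i, lam i * (A i j - v)) - mu j := by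
    intro j
    have h := congrFun hceq j
    rw [Finset.sum_apply, Fintype.sum_sum_type] at h
    have h1 : ∑ i, (c (Sum.inl i) • V (Sum.inl i)) j = ∑ i, lam i * (A i j - v) := by
      apply Finset.sum_congr rfl
      intro i _
      simp [hV, hlam]
    have h2 : ∑ j', (c (Sum.inr j') • V (Sum.inr j')) j = - mu j := by
      have hterm : ∀ j', (c (Sum.inr j') • V (Sum.inr j')) j =
          -(if j = j' then c (Sum.inr j') else 0) := by
        intro j'
        simp [hV, Pi.single_apply, mul_ite]
      rw [Finset.sum_congr rfl (fun j' _ => hterm j'), Finset.sum_neg_distrib]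
      congr 1
      rw [Finset.sum_ite_eq Finset.univ j (fun j' => c (Sum.inr j'))]
      simp [hmu]
    rw [h1, h2] at h
    simpa [hbbdef, sub_eq_add_neg] using h
  set σ : ℝ := 1 + ∑ i, lam i with hσ
  have hσpos : 0 < σ := by
    have : 0 ≤ ∑ i, lam i := Finset.sum_nonneg fun i _ => hc0 (Sum.inl i)
    rw [hσ]; linarith
  set x : Fin m → ℝ := fun i => ((Pi.single s 1 : Fin m → ℝ) i + lam i) / σ with hx
  have hxΔ : x ∈ stdSimplex ℝ (Fin m) := by
    constructor
    · intro i
      apply div_nonneg _ hσpos.le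
      have h1 : (0:ℝ) ≤ (Pi.single s 1 : Fin m → ℝ) i := (single_mem_stdSimplex ℝ s).1 i
      linarith [hc0 (Sum.inl i)]
    · simp only [hx]
      rw [← Finset.sum_div, Finset.sum_add_distrib]
      rw [(single_mem_stdSimplex ℝ s).2]
      rw [div_eq_one_iff_eq hσpos.ne', hσ]
  have hxs : 0 < x s := by
    simp only [hx]
    apply div_pos _ hσpos
    have : (Pi.single s 1 : Fin m → ℝ) s = 1 := Pi.single_eq_same s 1
    rw [this]
    linarith [hc0 (Sum.inl s)]
  have hxvec : ∀ j, v ≤ Matrix.vecMul x A j := by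
    intro j
    have h1 := hkey j
    have h2 : ∑ i, lam i * (A i j - v) = ∑ i, lam i * A i j - (∑ i, lam i) * v := by
      rw [Finset.sum_mul, ← Finset.sum_sub_distrib]
      apply Finset.sum_congr rfl
      intro i _; ring
    have h3 : A s j + ∑ i, lam i * A i j = v * σ + mu j := by
      rw [hσ]; rw [h2] at h1; ring_nf; ring_nf at h1; linarith
    have h4 : Matrix.vecMul x A j = (A s j + ∑ i, lam i * A i j) / σ := by
      simp only [Matrix.vecMul, dotProduct, hx]
      have hterm : ∀ i, ((Pi.single s 1 : Fin m → ℝ) i + lam i) / σ * A i j =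
          ((Pi.single s 1 : Fin m → ℝ) i * A i j + lam i * A i j) / σ := fun i => by
        ring
      rw [Finset.sum_congr rfl (fun i _ => hterm i), ← Finset.sum_div,
        Finset.sum_add_distrib]
      congr 2
      simp only [Pi.single_apply, ite_mul, one_mul, zero_mul]
      rw [Finset.sum_ite_eq' Finset.univ s (fun i => A i j)]
      simp
    rw [h4, h3, le_div_iff₀ hσpos]
    have : 0 ≤ mu j := hc0 (Sum.inr j)
    linarith
  -- x is optimal: (x, y0) is a Nash equilibrium
  have hxy0 : x ⬝ᵥ A.mulVec y0 = v := by
    apply le_antisymm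
    · exact hmax x hxΔ
    · rw [Matrix.dotProduct_mulVec, dotProduct_comm]
      exact le_dot_of_forall_le hy0 hxvec
  have hNE2 : IsNashEq A x y0 := by
    refine ⟨hxΔ, hy0, ?_, ?_⟩
    · intro x' hx'
      rw [hxy0]
      exact (hmax x' hx').trans (le_of_eq hv.symm)
    · intro y' hy'
      rw [hxy0, Matrix.dotProduct_mulVec, dotProduct_comm]
      exact le_dot_of_forall_le hy' hxvec
  exact absurd (hness x y0 hNE2) (ne_of_gt hxs)

lemma dot_neg_transpose {m n : ℕ} (A : Matrix (Fin m) (Fin n) ℝ)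
    (x : Fin m → ℝ) (y : Fin n → ℝ) :
    y ⬝ᵥ (-Aᵀ).mulVec x = -(x ⬝ᵥ A.mulVec y) := by
  rw [Matrix.neg_mulVec, dotProduct_neg, Matrix.mulVec_transpose,
    dotProduct_comm, ← Matrix.dotProduct_mulVec]

lemma nash_transpose {m n : ℕ} (A : Matrix (Fin m) (Fin n) ℝ)
    (x : Fin m → ℝ) (y : Fin n → ℝ) :
    IsNashEq A x y ↔ IsNashEq (-Aᵀ) y x := by
  constructor
  · rintro ⟨hx, hy, hmax, hmin⟩
    refine ⟨hy, hx, ?_, ?_⟩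
    · intro y' hy'
      rw [dot_neg_transpose, dot_neg_transpose]
      exact neg_le_neg (hmin y' hy')
    · intro x' hx'
      rw [dot_neg_transpose, dot_neg_transpose]
      exact neg_le_neg (hmax x' hx')
  · rintro ⟨hy, hx, hmax, hmin⟩
    refine ⟨hx, hy, ?_, ?_⟩
    · intro x' hx'
      have := hmin x' hx'
      rw [dot_neg_transpose, dot_neg_transpose] at this
      linarith
    · intro y' hy'
      have := hmax y' hy'
      rw [dot_neg_transpose, dot_neg_transpose] at this
      linarith

/-- If some player of a two-player zero-sum game has a
non-essential pure strategy (one played with probability zero in every Nash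
equilibrium), then for some player there is a non-essential strategy and a Nash
equilibrium against which deviating to that strategy is strictly worse than the
equilibrium value. -/
theorem nonessential_strategy_strictly_worse
    (m n : ℕ) (A : Matrix (Fin m) (Fin n) ℝ)
    (hexists : (∃ s : Fin m, ∀ x y, IsNashEq A x y → x s = 0) ∨
               (∃ t : Fin n, ∀ x y, IsNashEq A x y → y t = 0))
    (hNEexists : ∃ x y, IsNashEq A x y) :
    (∃ s : Fin m, (∀ x y, IsNashEq A x y → x s = 0) ∧
      ∃ xstar ystar, IsNashEq A xstar ystar ∧
        (Pi.single s (1 : ℝ)) ⬝ᵥ A.mulVec ystar < xstar ⬝ᵥ A.mulVec ystar) ∨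
    (∃ t : Fin n, (∀ x y, IsNashEq A x y → y t = 0) ∧
      ∃ xstar ystar, IsNashEq A xstar ystar ∧
        xstar ⬝ᵥ A.mulVec ystar < xstar ⬝ᵥ A.mulVec (Pi.single t (1 : ℝ))) := by
  obtain ⟨x0, y0, h0⟩ := hNEexists
  rcases hexists with ⟨s, hs⟩ | ⟨t, ht⟩
  · exact Or.inl ⟨s, hs, case_row A s hs x0 y0 h0⟩
  · refine Or.inr ⟨t, ht, ?_⟩
    have ht' : ∀ y x, IsNashEq (-Aᵀ) y x → y t = 0 := fun y x h =>
      ht x y ((nash_transpose A x y).mpr h)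
    obtain ⟨ystar, xstar, hNEB, hlt⟩ :=
      case_row (-Aᵀ) t ht' y0 x0 ((nash_transpose A x0 y0).mp h0)
    refine ⟨xstar, ystar, (nash_transpose A xstar ystar).mpr hNEB, ?_⟩
    have h1 : (Pi.single t (1:ℝ)) ⬝ᵥ (-Aᵀ).mulVec xstar =
        -(xstar ⬝ᵥ A.mulVec (Pi.single t 1)) := dot_neg_transpose A xstar (Pi.single t 1)
    have h2 : ystar ⬝ᵥ (-Aᵀ).mulVec xstar = -(xstar ⬝ᵥ A.mulVec ystar) :=
      dot_neg_transpose A xstar ystar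
    rw [h1, h2] at hlt
    linarith
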